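/- Let X₁, X₂, … be i.i.d. random variables uniform on a finite set of size N, fix k, and let b₁, …, b_k be k distinct elements of the set. Define R_j = min{t ≥ 1 : X_t = b_j}. Conditional on the ordering R_{τ(1)} < R_{τ(2)} < … < R_{τ(k)}, the gaps R_{τ(1)}, R_{τ(2)} − R_{τ(1)}, …, R_{τ(k)} − R_{τ(k−1)} are independent, with the j-th gap geometric of parameter (k+1−j)/N. -/

import Mathlib

open MeasureTheory ProbabilityTheory

namespace HTGaux



/-- cumulative sums of the (extended) gap sequence -/
def cum (k : ℕ) (g : Fin k → ℕ) (m : ℕ) : ℕ :=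
  ∑ i ∈ Finset.range m, if h : i < k then g ⟨i, h⟩ else 1

lemma cum_zero (k : ℕ) (g : Fin k → ℕ) : cum k g 0 = 0 := by simp [cum]

lemma cum_succ (k : ℕ) (g : Fin k → ℕ) (m : ℕ) :
    cum k g (m + 1) = cum k g m + (if h : m < k then g ⟨m, h⟩ else 1) := by
  simp [cum, Finset.sum_range_succ]

lemma cum_succ_fin (k : ℕ) (g : Fin k → ℕ) (j : Fin k) :
    cum k g (j + 1) = cum k g j + g j := by
  rw [cum_succ, dif_pos j.isLt]

lemma cum_strictMono {k : ℕ} {g : Fin k → ℕ} (hg : ∀ j, 1 ≤ g j) :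
    StrictMono (cum k g) := by
  apply strictMono_nat_of_lt_succ
  intro m
  rw [cum_succ]
  have : 1 ≤ if h : m < k then g ⟨m, h⟩ else 1 := by
    split
    · exact hg _
    · exact le_refl _
  omega

lemma one_le_cum {k : ℕ} {g : Fin k → ℕ} (hg : ∀ j, 1 ≤ g j) (m : ℕ) (hm : 1 ≤ m) :
    1 ≤ cum k g m := by
  have := cum_strictMono hg (show 0 < m from hm)
  rw [cum_zero] at this; omega

/-- locate the window containing t -/
lemma exists_window {k : ℕ} {g : Fin k → ℕ} (j : ℕ) {t : ℕ}
    (h1 : 1 ≤ t) (h2 : t ≤ cum k g (j + 1)) :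
    ∃ i ≤ j, cum k g i < t ∧ t ≤ cum k g (i + 1) := by
  induction j with
  | zero => exact ⟨0, le_refl _, by rw [cum_zero]; omega, h2⟩
  | succ n ih =>
    by_cases h : t ≤ cum k g (n + 1)
    · obtain ⟨i, hi, h3, h4⟩ := ih h
      exact ⟨i, by omega, h3, h4⟩
    · exact ⟨n + 1, le_refl _, by omega, h2⟩





lemma tsum_pi_prod : ∀ (k : ℕ) (f : Fin k → ℕ → ENNReal),
    ∑' g : Fin k → ℕ, ∏ j, f j (g j) = ∏ j, ∑' n, f j n := by
  intro k
  induction k with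
  | zero =>
    intro f
    simp only [Finset.univ_eq_empty, Finset.prod_empty]
    exact tsum_eq_single (fun (i : Fin 0) => (0:ℕ))
      (fun b' hb' => absurd (funext fun i => i.elim0) hb')
  | succ n ih =>
    intro f
    rw [← (Fin.consEquiv (fun _ => ℕ)).tsum_eq]
    have : ∀ p : ℕ × (Fin n → ℕ),
        (∏ j, f j ((Fin.consEquiv (fun _ => ℕ)) (p.1, p.2) j)) =
          f 0 p.1 * ∏ j : Fin n, f j.succ (p.2 j) := by
      intro p
      rw [Fin.prod_univ_succ]
      simp [Fin.consEquiv]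
    calc ∑' p : ℕ × (Fin n → ℕ), ∏ j, f j ((Fin.consEquiv (fun _ => ℕ)) p j)
        = ∑' (a : ℕ) (h : Fin n → ℕ), f 0 a * ∏ j : Fin n, f j.succ (h j) := by
          rw [← ENNReal.tsum_prod]
          exact tsum_congr fun p => this p
      _ = (∑' a : ℕ, f 0 a) * ∏ j : Fin n, ∑' m, f j.succ m := by
          rw [← ENNReal.tsum_mul_right]
          exact tsum_congr fun a => by rw [ENNReal.tsum_mul_left, ih]
      _ = ∏ j, ∑' m, f j m := by rw [Fin.prod_univ_succ]



lemma one_sub_div_nat {N m : ℕ} (hm : m ≤ N) (hN : 0 < N) :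
    (1 : ENNReal) - (m : ENNReal) / N = ((N - m : ℕ) : ENNReal) / N := by
  have hN' : (N : ENNReal) ≠ 0 := by
    simpa using hN.ne'
  refine ENNReal.sub_eq_of_eq_add (by
    exact (ENNReal.div_lt_top (ENNReal.natCast_ne_top m) hN').ne) ?_
  rw [ENNReal.div_add_div_same, ← Nat.cast_add, Nat.sub_add_cancel hm,
    ENNReal.div_self hN' (ENNReal.natCast_ne_top N)]

lemma measure_preimage_finset {Ω : Type*} [MeasurableSpace Ω] (μ : Measure Ω) {N : ℕ}
    (Y : Ω → Fin N) (hYm : Measurable Y) (hY : ∀ a : Fin N, μ {ω | Y ω = a} = 1 / N)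
    (S : Finset (Fin N)) : μ (Y ⁻¹' ↑S) = (S.card : ENNReal) / N := by
  have h1 : Y ⁻¹' ↑S = ⋃ a ∈ S, {ω | Y ω = a} := by
    ext ω; simp
  rw [h1, measure_biUnion_finset ?disj ?meas]
  · rw [Finset.sum_congr rfl fun a _ => hY a, Finset.sum_const, nsmul_eq_mul, mul_one_div]
  case disj =>
    intro a _ a' _ hne
    rw [Function.onFun, Set.disjoint_left]
    intro ω h h'
    exact hne (h.symm.trans h')
  case meas =>
    intro a _
    exact hYm (MeasurableSet.singleton a)


lemma measure_preimage_finset_compl {Ω : Type*} [MeasurableSpace Ω] (μ : Measure Ω)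
    [IsProbabilityMeasure μ] {N : ℕ} (hN : 0 < N)
    (Y : Ω → Fin N) (hYm : Measurable Y) (hY : ∀ a : Fin N, μ {ω | Y ω = a} = 1 / N)
    (S : Finset (Fin N)) : μ (Y ⁻¹' (↑S)ᶜ) = ((N - S.card : ℕ) : ENNReal) / N := by
  rw [Set.preimage_compl,
    measure_compl (hYm MeasurableSet.of_discrete) (measure_ne_top _ _),
    measure_univ, measure_preimage_finset μ Y hYm hY S,
    one_sub_div_nat (by simpa using S.card_le_univ) hN]





lemma never_hit_null {Ω : Type*} [MeasurableSpace Ω] (μ : Measure Ω) [IsProbabilityMeasure μ]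
    {N : ℕ} (hN : 0 < N) (X : ℕ → Ω → Fin N) (hmeas : ∀ i, Measurable (X i))
    (hindep : iIndepFun X μ)
    (hunif : ∀ i (a : Fin N), μ {ω | X i ω = a} = 1 / N) (a : Fin N) :
    μ {ω | ∀ t, 1 ≤ t → X t ω ≠ a} = 0 := by
  set r : ENNReal := ((N - 1 : ℕ) : ENNReal) / N with hr
  have key : ∀ n : ℕ, μ {ω | ∀ t, 1 ≤ t → X t ω ≠ a} ≤ r ^ n := by
    intro n
    have hsub : {ω | ∀ t, 1 ≤ t → X t ω ≠ a} ⊆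
        ⋂ t ∈ Finset.Icc 1 n, X t ⁻¹' (↑({a} : Finset (Fin N)))ᶜ := by
      intro ω hω
      simp only [Set.mem_iInter]
      intro t ht
      simp only [Finset.mem_Icc] at ht
      simp [Set.mem_preimage, hω t ht.1]
    refine (measure_mono hsub).trans_eq ?_
    rw [hindep.measure_inter_preimage_eq_mul (Finset.Icc 1 n)
      (sets := fun _ => (↑({a} : Finset (Fin N)))ᶜ) (fun i _ => MeasurableSet.of_discrete)]
    have : ∀ t ∈ Finset.Icc 1 n, μ (X t ⁻¹' (↑({a} : Finset (Fin N)))ᶜ) = r := by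
      intro t _
      rw [measure_preimage_finset_compl μ hN (X t) (hmeas t) (hunif t)]
      simp [hr]
    rw [Finset.prod_congr rfl this, Finset.prod_const, Nat.card_Icc]
    simp
  have hrlt : r < 1 := by
    rw [hr, ENNReal.div_lt_iff (Or.inl (by simpa using hN.ne')) (Or.inl (ENNReal.natCast_ne_top N))]
    rw [one_mul, Nat.cast_lt]
    omega
  have htend := ENNReal.tendsto_pow_atTop_nhds_zero_of_lt_one hrlt
  exact le_antisymm (ge_of_tendsto' htend key) zero_le


section E
variable {N k : ℕ} (b : Fin k → Fin N) (σ : Equiv.Perm (Fin k)) (g : Fin k → ℕ)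

/-- the set of not-yet-hit targets at stage `j` -/
def tail (j : Fin k) : Finset (Fin N) := (Finset.Ici j).image fun i => b (σ i)

lemma mem_tail {j : Fin k} {x : Fin N} : x ∈ tail b σ j ↔ ∃ i : Fin k, j ≤ i ∧ b (σ i) = x := by
  simp [tail]

lemma card_tail (hb : Function.Injective b) (j : Fin k) : (tail b σ j).card = k - j := by
  rw [tail, Finset.card_image_of_injective _ (fun x y h => σ.injective (hb h)), Fin.card_Ici]

/-- the set of allowed values at time `t` -/
def Aset (t : ℕ) : Set (Fin N) :=
  ⋂ j : Fin k, (if t = HTGaux.cum k g (j + 1) then {b (σ j)}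
    else if HTGaux.cum k g (j : ℕ) < t ∧ t < HTGaux.cum k g (j + 1) then (↑(tail b σ j))ᶜ
    else Set.univ)

variable {g} (hg : ∀ j, 1 ≤ g j)
include hg

lemma Aset_endpoint (j : Fin k) : Aset b σ g (HTGaux.cum k g (j + 1)) = {b (σ j)} := by
  have hsm := HTGaux.cum_strictMono hg
  ext x
  simp only [Aset, Set.mem_iInter]
  constructor
  · intro h
    have := h j
    rwa [if_pos rfl] at this
  · intro hx j'
    by_cases h1 : HTGaux.cum k g ((j : ℕ) + 1) = HTGaux.cum k g ((j' : ℕ) + 1)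
    · have hjj' : j = j' := by
        have := hsm.injective h1
        exact Fin.ext (by omega)
      subst hjj'
      rw [if_pos rfl]
      exact hx
    · rw [if_neg h1, if_neg ?_]
      · trivial
      · rintro ⟨ha, hc⟩
        have h2 : (j : ℕ) + 1 < (j' : ℕ) + 1 := hsm.lt_iff_lt.mp hc
        have h3 : HTGaux.cum k g ((j : ℕ) + 1) ≤ HTGaux.cum k g (j' : ℕ) :=
          hsm.monotone (by omega)
        omega

lemma Aset_interior (j : Fin k) {t : ℕ} (h1 : HTGaux.cum k g (j : ℕ) < t)
    (h2 : t < HTGaux.cum k g ((j : ℕ) + 1)) :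
    Aset b σ g t = (↑(tail b σ j) : Set (Fin N))ᶜ := by
  have hsm := HTGaux.cum_strictMono hg
  ext x
  simp only [Aset, Set.mem_iInter]
  constructor
  · intro h
    have := h j
    rwa [if_neg (by omega), if_pos ⟨h1, h2⟩] at this
  · intro hx j'
    by_cases hcase : j' = j
    · subst hcase
      rw [if_neg (by omega), if_pos ⟨h1, h2⟩]
      exact hx
    · have hlt : (j' : ℕ) < j ∨ (j : ℕ) < j' := by
        rcases lt_or_gt_of_ne (fun h => hcase (Fin.ext h) : (j' : ℕ) ≠ j) with h | h
        · exact Or.inl h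
        · exact Or.inr h
      have hne : t ≠ HTGaux.cum k g ((j') + 1 : ℕ) := by
        rcases hlt with h | h
        · have : HTGaux.cum k g ((j' : ℕ) + 1) ≤ HTGaux.cum k g (j : ℕ) := hsm.monotone (by omega)
          omega
        · have : HTGaux.cum k g ((j : ℕ) + 1) ≤ HTGaux.cum k g ((j' : ℕ) + 1) :=
            hsm.monotone (by omega)
          omega
      have hni : ¬(HTGaux.cum k g (j' : ℕ) < t ∧ t < HTGaux.cum k g ((j' : ℕ) + 1)) := by
        rcases hlt with h | h
        · have : HTGaux.cum k g ((j' : ℕ) + 1) ≤ HTGaux.cum k g (j : ℕ) := hsm.monotone (by omega)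
          omega
        · have : HTGaux.cum k g ((j : ℕ) + 1) ≤ HTGaux.cum k g (j' : ℕ) := hsm.monotone (by omega)
          omega
      rw [if_neg hne, if_neg hni]
      trivial

end E
section F
variable {Ω : Type*} {N k : ℕ} (b : Fin k → Fin N) (σ : Equiv.Perm (Fin k)) (g : Fin k → ℕ)
  (X : ℕ → Ω → Fin N)

/-- the event that the hits happen in order `σ` with gaps `g` -/
def Ev : Set Ω := ⋂ t ∈ Finset.Icc 1 (HTGaux.cum k g k), X t ⁻¹' Aset b σ g t

variable {b σ g X}

lemma mem_Ev_iff (hg : ∀ j, 1 ≤ g j) {ω : Ω} :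
    ω ∈ Ev b σ g X ↔ ∀ j : Fin k,
      X (HTGaux.cum k g ((j : ℕ) + 1)) ω = b (σ j) ∧
      ∀ t, HTGaux.cum k g (j : ℕ) < t → t < HTGaux.cum k g ((j : ℕ) + 1) →
        X t ω ∉ (↑(tail b σ j) : Set (Fin N)) := by
  have hsm := HTGaux.cum_strictMono hg
  simp only [Ev, Set.mem_iInter, Finset.mem_Icc]
  constructor
  · intro h j
    constructor
    · have hmem : 1 ≤ HTGaux.cum k g ((j : ℕ) + 1) ∧ HTGaux.cum k g ((j : ℕ) + 1) ≤
          HTGaux.cum k g k := ⟨HTGaux.one_le_cum hg _ (by omega), hsm.monotone (by omega)⟩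
      have := h _ hmem
      rwa [Set.mem_preimage, Aset_endpoint b σ hg j, Set.mem_singleton_iff] at this
    · intro t h1 h2
      have hmem : 1 ≤ t ∧ t ≤ HTGaux.cum k g k := by
        have : HTGaux.cum k g ((j : ℕ) + 1) ≤ HTGaux.cum k g k := hsm.monotone (by omega)
        omega
      have := h _ hmem
      rwa [Set.mem_preimage, Aset_interior b σ hg j h1 h2, Set.mem_compl_iff] at this
  · intro h t ht
    have hk : 0 < k := by
      by_contra hk0
      have hk0' : k = 0 := by omega
      have : HTGaux.cum k g k = 0 := by simp [HTGaux.cum, hk0']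
      omega
    have hkk : HTGaux.cum k g k = HTGaux.cum k g ((k - 1) + 1) := by
      congr 1; omega
    obtain ⟨i, hik, h1, h2⟩ := HTGaux.exists_window (k - 1) ht.1 (hkk ▸ ht.2)
    have hik' : i < k := by omega
    rcases eq_or_lt_of_le h2 with he | hlt
    · rw [Set.mem_preimage, he, Aset_endpoint b σ hg ⟨i, hik'⟩]
      exact (h ⟨i, hik'⟩).1
    · rw [Set.mem_preimage, Aset_interior b σ hg ⟨i, hik'⟩ h1 hlt]
      exact (h ⟨i, hik'⟩).2 t h1 hlt

lemma sInf_eq_of_mem_Ev (hg : ∀ j, 1 ≤ g j) (hb : Function.Injective b) {ω : Ω}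
    (hω : ω ∈ Ev b σ g X) (j : Fin k) :
    sInf {t | 1 ≤ t ∧ X t ω = b (σ j)} = HTGaux.cum k g ((j : ℕ) + 1) := by
  have hsm := HTGaux.cum_strictMono hg
  rw [mem_Ev_iff hg] at hω
  set S := {t | 1 ≤ t ∧ X t ω = b (σ j)} with hS
  have hmem : HTGaux.cum k g ((j : ℕ) + 1) ∈ S :=
    ⟨HTGaux.one_le_cum hg _ (by omega), (hω j).1⟩
  refine le_antisymm (Nat.sInf_le hmem) ?_
  by_contra hcon
  push_neg at hcon
  have hmem' : sInf S ∈ S := Nat.sInf_mem ⟨_, hmem⟩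
  obtain ⟨h1, h2⟩ := hmem'
  obtain ⟨i, hij, hw1, hw2⟩ := HTGaux.exists_window (k := k) (g := g) (j : ℕ) h1 (by omega)
  have hik : i < k := by omega
  set fi : Fin k := ⟨i, hik⟩
  rcases eq_or_lt_of_le hw2 with he | hlt
  · have := (hω fi).1
    rw [← he] at this
    have : fi = j := σ.injective (hb (this.symm.trans h2))
    have hi : i = (j : ℕ) := by simpa using congrArg Fin.val this
    rw [hi] at he
    omega
  · have := (hω fi).2 (sInf S) hw1 hlt
    exact this ((mem_tail b σ).mpr ⟨j, by simpa [fi, Fin.le_def] using hij, h2.symm⟩)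

lemma mem_Ev_of_sInf_eq (hg : ∀ j, 1 ≤ g j) {ω : Ω}
    (hval : ∀ j : Fin k, sInf {t | 1 ≤ t ∧ X t ω = b (σ j)} = HTGaux.cum k g ((j : ℕ) + 1)) :
    ω ∈ Ev b σ g X := by
  have hsm := HTGaux.cum_strictMono hg
  rw [mem_Ev_iff hg]
  intro j
  constructor
  · have hne : {t | 1 ≤ t ∧ X t ω = b (σ j)}.Nonempty := by
      by_contra hcon
      rw [Set.not_nonempty_iff_eq_empty] at hcon
      have := hval j
      rw [hcon, Nat.sInf_empty] at this
      have := HTGaux.one_le_cum hg ((j : ℕ) + 1) (by omega)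
      omega
    have := Nat.sInf_mem hne
    rw [hval j] at this
    exact this.2
  · intro t h1 h2 hmem
    obtain ⟨i, hji, hbi⟩ := (mem_tail b σ).mp hmem
    have hle : HTGaux.cum k g ((j : ℕ) + 1) ≤ HTGaux.cum k g ((i : ℕ) + 1) :=
      hsm.monotone (by have := Fin.le_def.mp hji; omega)
    have : t ∉ {s | 1 ≤ s ∧ X s ω = b (σ i)} :=
      Nat.notMem_of_lt_sInf (by rw [hval i]; omega)
    exact this ⟨by omega, hbi.symm ▸ rfl⟩

lemma perm_eq_of_strictMono {k : ℕ} (f : Fin k → ℕ) (σ τ : Equiv.Perm (Fin k))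
    (hσ : StrictMono fun j => f (σ j)) (hτ : StrictMono fun j => f (τ j)) : τ = σ := by
  have hrange : Set.range (fun j => f (σ j)) = Set.range fun j => f (τ j) := by
    have h1 : Set.range (fun j => f (σ j)) = Set.range f := by
      have he : (fun j => f (σ j)) = f ∘ σ := rfl
      rw [he, Set.range_comp, Equiv.range_eq_univ, Set.image_univ]
    have h2 : Set.range (fun j => f (τ j)) = Set.range f := by
      have he : (fun j => f (τ j)) = f ∘ τ := rfl
      rw [he, Set.range_comp, Equiv.range_eq_univ, Set.image_univ]
    rw [h1, h2]
  have hwf : WellFoundedLT (Fin k) := inferInstance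
  have heq : (fun j => f (σ j)) = fun j => f (τ j) :=
    (StrictMono.range_inj (β := Fin k) (γ := ℕ) hσ hτ).mp hrange
  have hfinj : Function.Injective f := by
    intro x y hxy
    have : σ (σ.symm x) = x := σ.apply_symm_apply x
    have h' : f (σ (σ.symm x)) = f (σ (σ.symm y)) := by
      rw [σ.apply_symm_apply, σ.apply_symm_apply]; exact hxy
    have := hσ.injective h'
    have := congrArg σ this
    rwa [σ.apply_symm_apply, σ.apply_symm_apply] at this
  ext j
  have : f (σ j) = f (τ j) := congrFun heq j
  exact congrArg Fin.val (hfinj this).symm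

end F
section G
variable {Ω : Type*} [MeasurableSpace Ω]

lemma measure_Ev (μ : Measure Ω) [IsProbabilityMeasure μ]
    {N k : ℕ} (hN : 0 < N)
    (b : Fin k → Fin N) (hb : Function.Injective b) (σ : Equiv.Perm (Fin k))
    {g : Fin k → ℕ} (hg : ∀ j, 1 ≤ g j)
    (X : ℕ → Ω → Fin N) (hmeas : ∀ i, Measurable (X i))
    (hindep : iIndepFun X μ)
    (hunif : ∀ i (a : Fin N), μ {ω | X i ω = a} = 1 / N) :
    μ (Ev b σ g X) = ∏ j : Fin k,
      (1 / N : ENNReal) * (((N - (k - (j : ℕ)) : ℕ) : ENNReal) / N) ^ (g j - 1) := by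
  have hsm := HTGaux.cum_strictMono hg
  -- independence step
  have hstep : μ (Ev b σ g X) = ∏ t ∈ Finset.Icc 1 (HTGaux.cum k g k),
      μ (X t ⁻¹' Aset b σ g t) := by
    rw [Ev, hindep.measure_inter_preimage_eq_mul (Finset.Icc 1 (HTGaux.cum k g k))
      (sets := fun t => Aset b σ g t) (fun i _ => MeasurableSet.of_discrete)]
  rw [hstep]
  set w : ℕ → ENNReal := fun j =>
    if h : j < k then (1 / N : ENNReal) * (((N - (k - j) : ℕ) : ENNReal) / N) ^ (g ⟨j, h⟩ - 1)
    else 1 with hw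
  have main : ∀ m, m ≤ k → ∏ t ∈ Finset.Ioc 0 (HTGaux.cum k g m),
      μ (X t ⁻¹' Aset b σ g t) = ∏ j ∈ Finset.range m, w j := by
    intro m
    induction m with
    | zero => intro _; rw [HTGaux.cum_zero]; simp
    | succ n ih =>
      intro hn
      have hnk : n < k := hn
      set fn : Fin k := ⟨n, hnk⟩ with hfn
      have hcums : HTGaux.cum k g (n + 1) = HTGaux.cum k g n + g fn := by
        rw [HTGaux.cum_succ, dif_pos hnk]
      have h1 : HTGaux.cum k g n ≤ HTGaux.cum k g (n + 1) := hsm.monotone (by omega)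
      rw [← Finset.prod_Ioc_consecutive _ (Nat.zero_le _) h1, ih (by omega),
        Finset.prod_range_succ]
      congr 1
      -- product over the window (cum n, cum (n+1)]
      have hlt : HTGaux.cum k g n < HTGaux.cum k g (n + 1) := by
        have := hg fn; omega
      rw [← Finset.Ioo_insert_right hlt, Finset.prod_insert Finset.right_notMem_Ioo]
      -- endpoint factor
      have hend : μ (X (HTGaux.cum k g (n + 1)) ⁻¹' Aset b σ g (HTGaux.cum k g (n + 1))) =
          1 / N := by
        have : HTGaux.cum k g (n + 1) = HTGaux.cum k g ((fn : ℕ) + 1) := rfl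
        rw [this, Aset_endpoint b σ hg fn]
        exact hunif _ _
      -- interior factors
      have hint : ∀ t ∈ Finset.Ioo (HTGaux.cum k g n) (HTGaux.cum k g (n + 1)),
          μ (X t ⁻¹' Aset b σ g t) = (((N - (k - n) : ℕ) : ENNReal) / N) := by
        intro t ht
        rw [Finset.mem_Ioo] at ht
        rw [Aset_interior b σ hg fn ht.1 ht.2,
          HTGaux.measure_preimage_finset_compl μ hN (X t) (hmeas t) (hunif t),
          card_tail b σ hb fn]
      rw [hend, Finset.prod_congr rfl hint, Finset.prod_const, Nat.card_Ioo, hcums]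
      rw [hw]
      simp only [dif_pos hnk, ← hfn]
      rw [mul_comm]
      have h1 : HTGaux.cum k g n + g fn - HTGaux.cum k g n - 1 = g fn - 1 := by omega
      have h2 : ((N - (k - n) : ℕ) : ENNReal) = ((N - (k - (fn : ℕ)) : ℕ) : ENNReal) := rfl
      rw [h1, h2]
      exact mul_comm _ _
  have hIcc : Finset.Icc 1 (HTGaux.cum k g k) = Finset.Ioc 0 (HTGaux.cum k g k) := rfl
  rw [hIcc, main k (le_refl k)]
  rw [← Fin.prod_univ_eq_prod_range w k]
  apply Finset.prod_congr rfl
  intro j _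
  rw [hw]
  simp only [dif_pos j.isLt]

end G
lemma measurableSet_Ev {Ω : Type*} [MeasurableSpace Ω] {N k : ℕ}
    (b : Fin k → Fin N) (σ : Equiv.Perm (Fin k)) (g : Fin k → ℕ)
    (X : ℕ → Ω → Fin N) (hmeas : ∀ i, Measurable (X i)) :
    MeasurableSet (Ev b σ g X) :=
  MeasurableSet.biInter (Finset.Icc 1 (HTGaux.cum k g k) : Finset ℕ).countable_toSet
    (fun t _ => (hmeas t) MeasurableSet.of_discrete)

end HTGaux

theorem hitting_time_gaps_geometric
    {Ω : Type*} [MeasurableSpace Ω] (μ : Measure Ω) [IsProbabilityMeasure μ]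
    (N k : ℕ) (hN : 0 < N) (hk : 0 < k) (hkN : k ≤ N)
    (X : ℕ → Ω → Fin N)
    (hmeas : ∀ i, Measurable (X i))
    (hindep : iIndepFun X μ)
    (hunif : ∀ i (a : Fin N), μ {ω | X i ω = a} = 1 / N)
    (b : Fin k → Fin N) (hb : Function.Injective b)
    (R : Fin k → Ω → ℕ)
    (hR : ∀ j ω, R j ω = sInf {t | 1 ≤ t ∧ X t ω = b j})
    (τ : Ω → Equiv.Perm (Fin k))
    (hτ : ∀ᵐ ω ∂μ, StrictMono (fun j => R (τ ω j) ω)) :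
    ∀ σ : Equiv.Perm (Fin k), ∀ g : Fin k → ℕ, (∀ j, 1 ≤ g j) →
      μ {ω | τ ω = σ ∧ ∀ j : Fin k,
          R (τ ω j) ω - (if h : (j : ℕ) = 0 then 0 else
            R (τ ω ⟨(j : ℕ) - 1, Nat.lt_of_le_of_lt (Nat.sub_le _ _) j.isLt⟩) ω) = g j} =
      μ {ω | τ ω = σ} *
        ∏ j : Fin k, (((k - (j : ℕ) : ℕ) : ENNReal) / N) *
          (1 - ((k - (j : ℕ) : ℕ) : ENNReal) / N) ^ (g j - 1) := by
  intro σ g hg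
  classical
  -- conversion between Ev membership and hitting-time values
  have hEv_iff_vals : ∀ (g' : Fin k → ℕ), (∀ j, 1 ≤ g' j) → ∀ ω,
      (ω ∈ HTGaux.Ev b σ g' X ↔
        ∀ j : Fin k, R (σ j) ω = HTGaux.cum k g' ((j : ℕ) + 1)) := by
    intro g' hg' ω
    constructor
    · intro h j
      rw [hR]
      exact HTGaux.sInf_eq_of_mem_Ev hg' hb h j
    · intro h
      exact HTGaux.mem_Ev_of_sInf_eq hg' (fun j => by rw [← hR]; exact h j)
  -- strict monotonicity of R ∘ σ from the values
  have hmono_of_vals : ∀ (g' : Fin k → ℕ), (∀ j, 1 ≤ g' j) → ∀ ω,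
      (∀ j : Fin k, R (σ j) ω = HTGaux.cum k g' ((j : ℕ) + 1)) →
      StrictMono fun j => R (σ j) ω := by
    intro g' hg' ω h j j' hjj'
    simp only [h j, h j']
    exact HTGaux.cum_strictMono hg' (by have h := Fin.lt_def.mp hjj'; omega)
  -- extracting clean gap equations from the dite form
  have hgap_zero : ∀ ω, (∀ j : Fin k,
        R (τ ω j) ω - (if h : (j : ℕ) = 0 then 0 else
          R (τ ω ⟨(j : ℕ) - 1, Nat.lt_of_le_of_lt (Nat.sub_le _ _) j.isLt⟩) ω) = g j) →
      R (τ ω ⟨0, hk⟩) ω = g ⟨0, hk⟩ := by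
    intro ω hgap
    have := hgap ⟨0, hk⟩
    simpa using this
  have hgap_succ : ∀ ω, (∀ j : Fin k,
        R (τ ω j) ω - (if h : (j : ℕ) = 0 then 0 else
          R (τ ω ⟨(j : ℕ) - 1, Nat.lt_of_le_of_lt (Nat.sub_le _ _) j.isLt⟩) ω) = g j) →
      ∀ n (hn : n + 1 < k),
        R (τ ω ⟨n + 1, hn⟩) ω - R (τ ω ⟨n, by omega⟩) ω = g ⟨n + 1, hn⟩ := by
    intro ω hgap n hn
    have := hgap ⟨n + 1, hn⟩
    simpa using this
  -- the values from the gaps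
  have hvals_of_gaps : ∀ ω, τ ω = σ → StrictMono (fun j => R (τ ω j) ω) →
      (∀ j : Fin k,
        R (τ ω j) ω - (if h : (j : ℕ) = 0 then 0 else
          R (τ ω ⟨(j : ℕ) - 1, Nat.lt_of_le_of_lt (Nat.sub_le _ _) j.isLt⟩) ω) = g j) →
      ∀ n (hn : n < k), R (σ ⟨n, hn⟩) ω = HTGaux.cum k g (n + 1) := by
    intro ω hτσ hmono hgap n
    induction n with
    | zero =>
      intro hn
      have h1 := hgap_zero ω hgap
      rw [hτσ] at h1
      have h2 := HTGaux.cum_succ k g 0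
      rw [HTGaux.cum_zero, dif_pos hk] at h2
      have h3 : g ⟨0, hk⟩ = g ⟨0, hn⟩ := rfl
      omega
    | succ n ihn =>
      intro hn
      have hn' : n < k := by omega
      have ih := ihn hn'
      have h1 := hgap_succ ω hgap n hn
      rw [hτσ] at h1
      have hlt : R (σ ⟨n, hn'⟩) ω < R (σ ⟨n + 1, hn⟩) ω := by
        have := hmono (show (⟨n, hn'⟩ : Fin k) < ⟨n + 1, hn⟩ by simp [Fin.lt_def])
        rwa [hτσ] at this
      have h2 := HTGaux.cum_succ k g (n + 1)
      rw [dif_pos hn] at h2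
      have h3 : R (σ ⟨n, by omega⟩) ω = R (σ ⟨n, hn'⟩) ω := rfl
      omega
  -- gaps from the values
  have hgaps_of_vals : ∀ ω, τ ω = σ →
      (∀ j : Fin k, R (σ j) ω = HTGaux.cum k g ((j : ℕ) + 1)) →
      ∀ j : Fin k,
        R (τ ω j) ω - (if h : (j : ℕ) = 0 then 0 else
          R (τ ω ⟨(j : ℕ) - 1, Nat.lt_of_le_of_lt (Nat.sub_le _ _) j.isLt⟩) ω) = g j := by
    intro ω hτσ hvals j
    rw [hτσ]
    by_cases h0 : (j : ℕ) = 0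
    · rw [dif_pos h0]
      have hj : (⟨0, hk⟩ : Fin k) = j := by
        apply Fin.ext; simp; omega
      have h2 := HTGaux.cum_succ k g 0
      rw [HTGaux.cum_zero, dif_pos hk, hj] at h2
      have h1 := hvals j
      rw [h0] at h1
      norm_num at h1 h2
      omega
    · rw [dif_neg h0]
      set jp : Fin k := ⟨(j : ℕ) - 1, Nat.lt_of_le_of_lt (Nat.sub_le _ _) j.isLt⟩ with hjp
      have hn1 : (j : ℕ) - 1 + 1 = (j : ℕ) := by omega
      have h1 := hvals j
      have h2' : R (σ jp) ω = HTGaux.cum k g ((j : ℕ) - 1 + 1) := hvals jp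
      rw [hn1] at h2'
      have h3 := HTGaux.cum_succ_fin k g j
      omega
  -- a.e. identification of the LHS event with Ev
  have hLHS : μ {ω | τ ω = σ ∧ ∀ j : Fin k,
        R (τ ω j) ω - (if h : (j : ℕ) = 0 then 0 else
          R (τ ω ⟨(j : ℕ) - 1, Nat.lt_of_le_of_lt (Nat.sub_le _ _) j.isLt⟩) ω) = g j} =
      μ (HTGaux.Ev b σ g X) := by
    apply measure_congr
    rw [Filter.eventuallyEq_set]
    filter_upwards [hτ] with ω hmono
    constructor
    · rintro ⟨hτσ, hgap⟩
      rw [hEv_iff_vals g hg ω]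
      intro j
      have := hvals_of_gaps ω hτσ hmono hgap (j : ℕ) j.isLt
      simpa using this
    · intro hEv
      have hvals := (hEv_iff_vals g hg ω).mp hEv
      have hτσ : τ ω = σ := HTGaux.perm_eq_of_strictMono (fun i => R i ω) σ (τ ω)
        (hmono_of_vals g hg ω hvals) hmono
      exact ⟨hτσ, hgaps_of_vals ω hτσ hvals⟩
  -- the never-hit event is null
  have hnull := HTGaux.never_hit_null μ hN X hmeas hindep hunif (b (σ ⟨0, hk⟩))
  have hae_nh : ∀ᵐ ω ∂μ, ¬(∀ t, 1 ≤ t → X t ω ≠ b (σ ⟨0, hk⟩)) := by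
    have := measure_eq_zero_iff_ae_notMem.mp hnull
    filter_upwards [this] with ω hω
    exact hω
  -- a.e. identification of {τ = σ} with a disjoint union over gap sequences
  have hτeq : μ {ω | τ ω = σ} =
      μ (⋃ h : Fin k → ℕ, HTGaux.Ev b σ (fun j => h j + 1) X) := by
    apply measure_congr
    rw [Filter.eventuallyEq_set]
    filter_upwards [hτ, hae_nh] with ω hmono hnh
    constructor
    · intro hτσ
      push_neg at hnh
      obtain ⟨t0, ht01, ht0X⟩ := hnh
      have hmono' : StrictMono fun j => R (σ j) ω := by rwa [hτσ] at hmono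
      have hRj0 : 1 ≤ R (σ ⟨0, hk⟩) ω := by
        rw [hR]
        have hne : {t | 1 ≤ t ∧ X t ω = b (σ ⟨0, hk⟩)}.Nonempty := ⟨t0, ht01, ht0X⟩
        exact (Nat.sInf_mem hne).1
      set g' : Fin k → ℕ := fun j => if (j : ℕ) = 0 then R (σ j) ω
        else R (σ j) ω - R (σ ⟨(j : ℕ) - 1, Nat.lt_of_le_of_lt (Nat.sub_le _ _) j.isLt⟩) ω
        with hg'def
      have hg' : ∀ j, 1 ≤ g' j := by
        intro j
        simp only [hg'def]
        by_cases h0 : (j : ℕ) = 0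
        · rw [if_pos h0]
          have hj : j = ⟨0, hk⟩ := Fin.ext (by simpa using h0)
          rwa [hj]
        · rw [if_neg h0]
          have : R (σ ⟨(j : ℕ) - 1, Nat.lt_of_le_of_lt (Nat.sub_le _ _) j.isLt⟩) ω
              < R (σ j) ω := hmono' (by simp [Fin.lt_def]; omega)
          omega
      have hvals : ∀ n (hn : n < k), R (σ ⟨n, hn⟩) ω = HTGaux.cum k g' (n + 1) := by
        intro n
        induction n with
        | zero =>
          intro hn
          rw [HTGaux.cum_succ, HTGaux.cum_zero, dif_pos hn]
          have : g' ⟨0, hn⟩ = R (σ ⟨0, hn⟩) ω := by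
            simp [hg'def]
          omega
        | succ n ihn =>
          intro hn
          have hn' : n < k := by omega
          have ih := ihn hn'
          have hlt : R (σ ⟨n, hn'⟩) ω < R (σ ⟨n + 1, hn⟩) ω :=
            hmono' (by simp [Fin.lt_def])
          have h2 := HTGaux.cum_succ k g' (n + 1)
          rw [dif_pos hn] at h2
          have hgval : g' ⟨n + 1, hn⟩ = R (σ ⟨n + 1, hn⟩) ω - R (σ ⟨n, hn'⟩) ω := by
            simp only [hg'def]
            rw [if_neg (by simp)]
            have hidx : (⟨((⟨n + 1, hn⟩ : Fin k) : ℕ) - 1,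
                Nat.lt_of_le_of_lt (Nat.sub_le _ _) (⟨n + 1, hn⟩ : Fin k).isLt⟩ : Fin k)
                = ⟨n, hn'⟩ := Fin.ext (by simp)
            rw [hidx]
          omega
      have hmem : ω ∈ HTGaux.Ev b σ g' X := by
        rw [hEv_iff_vals g' hg' ω]
        intro j
        have := hvals (j : ℕ) j.isLt
        simpa using this
      refine Set.mem_iUnion.mpr ⟨fun j => g' j - 1, ?_⟩
      have hfe : (fun j => g' j - 1 + 1) = g' := funext fun j => by have := hg' j; omega
      rw [hfe]
      exact hmem
    · intro hU
      obtain ⟨h, hmem⟩ := Set.mem_iUnion.mp hU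
      have hg1 : ∀ j : Fin k, 1 ≤ h j + 1 := fun j => by omega
      have hvals := (hEv_iff_vals _ hg1 ω).mp hmem
      exact HTGaux.perm_eq_of_strictMono (fun i => R i ω) σ (τ ω)
        (hmono_of_vals _ hg1 ω hvals) hmono
  -- disjointness of the union
  have hdisj : Pairwise (Function.onFun Disjoint
      fun h : Fin k → ℕ => HTGaux.Ev b σ (fun j => h j + 1) X) := by
    intro h1 h2 hne
    rw [Function.onFun, Set.disjoint_left]
    intro ω hm1 hm2
    apply hne
    have hg1 : ∀ j : Fin k, 1 ≤ h1 j + 1 := fun j => by omega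
    have hg2 : ∀ j : Fin k, 1 ≤ h2 j + 1 := fun j => by omega
    have hv1 := (hEv_iff_vals _ hg1 ω).mp hm1
    have hv2 := (hEv_iff_vals _ hg2 ω).mp hm2
    have hcum : ∀ n, n < k →
        HTGaux.cum k (fun j => h1 j + 1) (n + 1) = HTGaux.cum k (fun j => h2 j + 1) (n + 1) := by
      intro n hn
      have e1 := hv1 ⟨n, hn⟩
      have e2 := hv2 ⟨n, hn⟩
      simp only [Fin.val_mk] at e1 e2
      omega
    funext j
    have q1 := HTGaux.cum_succ_fin k (fun j => h1 j + 1) j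
    have q2 := HTGaux.cum_succ_fin k (fun j => h2 j + 1) j
    have c2 := hcum (j : ℕ) j.isLt
    have c1 : HTGaux.cum k (fun j => h1 j + 1) (j : ℕ) =
        HTGaux.cum k (fun j => h2 j + 1) (j : ℕ) := by
      rcases Nat.eq_zero_or_pos (j : ℕ) with h | h
      · rw [h, HTGaux.cum_zero, HTGaux.cum_zero]
      · have : (j : ℕ) - 1 + 1 = (j : ℕ) := by omega
        rw [← this]
        exact hcum ((j : ℕ) - 1) (by omega)
    omega
  -- the value of μ {τ = σ}
  have hgeom : ∀ j : Fin k,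
      (1 : ENNReal) - ((N - (k - (j : ℕ)) : ℕ) : ENNReal) / N
        = ((k - (j : ℕ) : ℕ) : ENNReal) / N := by
    intro j
    rw [HTGaux.one_sub_div_nat (Nat.sub_le _ _) hN]
    congr 2
    omega
  have hτval : μ {ω | τ ω = σ} = ∏ j : Fin k,
      ((1 : ENNReal) / N) * (((k - (j : ℕ) : ℕ) : ENNReal) / N)⁻¹ := by
    rw [hτeq, measure_iUnion hdisj
      (fun h => HTGaux.measurableSet_Ev b σ (fun j => h j + 1) X hmeas)]
    have hc : ∀ h : Fin k → ℕ, μ (HTGaux.Ev b σ (fun j => h j + 1) X) =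
        ∏ j : Fin k, ((1 : ENNReal) / N) *
          (((N - (k - (j : ℕ)) : ℕ) : ENNReal) / N) ^ (h j) := by
      intro h
      rw [HTGaux.measure_Ev μ hN b hb σ (fun j => by omega : ∀ j, 1 ≤ h j + 1) X
        hmeas hindep hunif]
      exact Finset.prod_congr rfl fun j _ => by norm_num
    rw [tsum_congr hc, HTGaux.tsum_pi_prod k
      (fun j m => ((1 : ENNReal) / N) * (((N - (k - (j : ℕ)) : ℕ) : ENNReal) / N) ^ m)]
    apply Finset.prod_congr rfl
    intro j _
    rw [ENNReal.tsum_mul_left, ENNReal.tsum_geometric, hgeom j]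
  -- final computation
  have hgeom2 : ∀ j : Fin k, (1 : ENNReal) - ((k - (j : ℕ) : ℕ) : ENNReal) / N
      = ((N - (k - (j : ℕ)) : ℕ) : ENNReal) / N :=
    fun j => HTGaux.one_sub_div_nat (by omega) hN
  have hconv : ∀ j ∈ (Finset.univ : Finset (Fin k)), ((k - (j : ℕ) : ℕ) : ENNReal) / N *
        (1 - ((k - (j : ℕ) : ℕ) : ENNReal) / N) ^ (g j - 1) =
      ((k - (j : ℕ) : ℕ) : ENNReal) / N *
        (((N - (k - (j : ℕ)) : ℕ) : ENNReal) / N) ^ (g j - 1) := by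
    intro j _
    rw [hgeom2 j]
  rw [hLHS, HTGaux.measure_Ev μ hN b hb σ hg X hmeas hindep hunif, hτval,
    Finset.prod_congr rfl hconv, ← Finset.prod_mul_distrib]
  apply Finset.prod_congr rfl
  intro j _
  have hc0 : (((k - (j : ℕ) : ℕ) : ENNReal) / N) ≠ 0 := by
    rw [ne_eq, ENNReal.div_eq_zero_iff]
    push_neg
    constructor
    · have h : 0 < k - (j : ℕ) := by have := j.isLt; omega
      exact Nat.cast_ne_zero.mpr h.ne'
    · exact ENNReal.natCast_ne_top N
  have hcT : (((k - (j : ℕ) : ℕ) : ENNReal) / N) ≠ ⊤ :=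
    (ENNReal.div_lt_top (ENNReal.natCast_ne_top _) (by simpa using hN.ne')).ne
  have hring : ((1 : ENNReal) / N * (((k - (j : ℕ) : ℕ) : ENNReal) / N)⁻¹) *
      ((((k - (j : ℕ) : ℕ) : ENNReal) / N) *
        (((N - (k - (j : ℕ)) : ℕ) : ENNReal) / N) ^ (g j - 1)) =
      ((1 : ENNReal) / N) * (((((k - (j : ℕ) : ℕ) : ENNReal) / N)⁻¹ *
        ((((k - (j : ℕ) : ℕ) : ENNReal) / N))) *
        (((N - (k - (j : ℕ)) : ℕ) : ENNReal) / N) ^ (g j - 1)) := by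
    ring
  rw [hring, ENNReal.inv_mul_cancel hc0 hcT, one_mul]
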